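/- arXiv:2402.04791 — 2 statements merged into one kernel-verified Lean document; each statement's English description precedes it below -/
import Mathlib

section
/- If n = 2^m − 1 for some positive integer m, then the total mutual-visibility number of the n-dimensional hypercube satisfies μ_t(Q_n) ≥ 2^n / (n+1). -/
/-- The `n`-dimensional hypercube: vertices are subsets of `{1,…,n}` (modeled as
`Finset (Fin n)`), with `A` and `B` adjacent iff their symmetric difference has size 1. -/
def hypercube (n : ℕ) : SimpleGraph (Finset (Fin n)) where
  Adj A B := (symmDiff A B).card = 1
  symm := ⟨fun A B h => by simpa only [symmDiff_comm] using h⟩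
  loopless := ⟨fun A h => by simp [symmDiff_self] at h⟩

/-- `u` and `v` are `M`-visible in `G`: there is a shortest `u,v`-path containing
no vertex of `M` as an internal vertex. -/
def IsVisiblePair {V : Type*} (G : SimpleGraph V) (M : Set V) (u v : V) : Prop :=
  ∃ p : G.Walk u v, p.IsPath ∧ p.length = G.dist u v ∧
    ∀ x ∈ p.support, x ∈ M → x = u ∨ x = v

/-- `M` is a mutual-visibility set in `G`. -/
def IsMutualVisibilitySet {V : Type*} (G : SimpleGraph V) (M : Set V) : Prop :=
  ∀ u ∈ M, ∀ v ∈ M, IsVisiblePair G M u v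

/-- `M` is a total mutual-visibility set in `G`. -/
def IsTotalMutualVisibilitySet {V : Type*} (G : SimpleGraph V) (M : Set V) : Prop :=
  ∀ u v : V, IsVisiblePair G M u v

/-- The mutual-visibility number `μ(Q_n)`. -/
noncomputable def mu (n : ℕ) : ℕ :=
  sSup {k | ∃ M : Set (Finset (Fin n)), IsMutualVisibilitySet (hypercube n) M ∧ M.ncard = k}

/-- The total mutual-visibility number `μ_t(Q_n)`. -/
noncomputable def muTotal (n : ℕ) : ℕ :=
  sSup {k | ∃ M : Set (Finset (Fin n)), IsTotalMutualVisibilitySet (hypercube n) M ∧ M.ncard = k}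

/-- The chromatic mutual-visibility number `χ_μ(Q_n)`: the least number of colors in a
vertex-coloring of `Q_n` in which every color class is a mutual-visibility set. -/
noncomputable def chiMu (n : ℕ) : ℕ :=
  sInf {k | ∃ c : Finset (Fin n) → Fin k, ∀ i : Fin k,
    IsMutualVisibilitySet (hypercube n) {A | c A = i}}

/-- The total chromatic mutual-visibility number `χ_μ^total(Q_n)`. -/
noncomputable def chiMuTotal (n : ℕ) : ℕ :=
  sInf {k | ∃ c : Finset (Fin n) → Fin k, ∀ i : Fin k,
    IsTotalMutualVisibilitySet (hypercube n) {A | c A = i}}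

/-- A family `F` of `r`-element subsets of `[n]` contains an `(r,s,t)`-daisy if there are
`A ⊆ B` with `|A| = r - t` and `|B| = r + s - t` such that every `r`-set `T` with
`A ⊆ T ⊆ B` belongs to `F`. -/
def ContainsDaisy (n r s t : ℕ) (F : Finset (Finset (Fin n))) : Prop :=
  ∃ A B : Finset (Fin n), A ⊆ B ∧ A.card = r - t ∧ B.card = r + s - t ∧
    ∀ T : Finset (Fin n), A ⊆ T → T ⊆ B → T.card = r → T ∈ F

/-- The Turán number `ex(n, D_r(s,t))`: the largest size of a family of `r`-element
subsets of `[n]` containing no `(r,s,t)`-daisy. -/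
noncomputable def daisyTuran (n r s t : ℕ) : ℕ :=
  sSup {k | ∃ F : Finset (Finset (Fin n)), (∀ T ∈ F, T.card = r) ∧
    ¬ ContainsDaisy n r s t F ∧ F.card = k}

section Aux

open Finset

variable {n : ℕ}

lemma symmDiff_singleton_of_mem {α : Type*} [DecidableEq α] {D : Finset α} {i : α}
    (hi : i ∈ D) : symmDiff D {i} = D.erase i := by
  ext x
  by_cases hx : x = i <;> simp [Finset.mem_symmDiff, hx, hi]

lemma card_symmDiff_le_walk_length :
    ∀ {u v : Finset (Fin n)} (p : (hypercube n).Walk u v), (symmDiff u v).card ≤ p.length := by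
  intro u v p
  induction p with
  | nil => simp [symmDiff_self]
  | @cons u w v h q ih =>
    have htri : symmDiff u v ⊆ symmDiff u w ∪ symmDiff w v := symmDiff_triangle u w v
    have h1 : (symmDiff u w).card = 1 := h
    calc (symmDiff u v).card ≤ (symmDiff u w ∪ symmDiff w v).card := Finset.card_le_card htri
      _ ≤ (symmDiff u w).card + (symmDiff w v).card := Finset.card_union_le _ _
      _ ≤ 1 + q.length := by omega
      _ = (SimpleGraph.Walk.cons h q).length := by simp [SimpleGraph.Walk.length_cons]; omega

lemma exists_good_walk (M : Set (Finset (Fin n)))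
    (hM : ∀ a ∈ M, ∀ b ∈ M, a ≠ b → 3 ≤ (symmDiff a b).card) :
    ∀ (d : ℕ) (u v : Finset (Fin n)), (symmDiff u v).card = d →
      ∃ p : (hypercube n).Walk u v, p.IsPath ∧ p.length = d ∧
        (∀ x ∈ p.support, symmDiff x v ⊆ symmDiff u v) ∧
        (∀ x ∈ p.support, x ∈ M → x = u ∨ x = v) := by
  intro d
  induction d with
  | zero =>
    intro u v h
    have huv : u = v := by
      have h0 : symmDiff u v = ∅ := Finset.card_eq_zero.mp h
      have : symmDiff u v = ⊥ := h0
      exact symmDiff_eq_bot.mp this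
    subst huv
    exact ⟨.nil, by simp, by simp, by simp, by simp⟩
  | succ k ih =>
    intro u v h
    rcases Nat.eq_zero_or_pos k with hk | hk
    · subst hk
      have hadj : (hypercube n).Adj u v := h
      refine ⟨.cons hadj .nil, ?_, by simp, ?_, ?_⟩
      · simp [SimpleGraph.Walk.isPath_iff_eq_nil, hadj.ne]
      · intro x hx
        simp only [SimpleGraph.Walk.support_cons, SimpleGraph.Walk.support_nil,
          List.mem_cons, List.mem_singleton] at hx
        rcases hx with rfl | hx
        · exact subset_rfl
        · rcases hx with rfl | h'
          · simp [symmDiff_self]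
          · simp at h'
      · intro x hx _
        simp only [SimpleGraph.Walk.support_cons, SimpleGraph.Walk.support_nil,
          List.mem_cons, List.mem_singleton] at hx
        rcases hx with rfl | hx
        · exact Or.inl rfl
        · rcases hx with rfl | h'
          · exact Or.inr rfl
          · simp at h'
    · obtain ⟨i, hi, j, hj, hij⟩ := Finset.one_lt_card.mp (by omega : 1 < (symmDiff u v).card)
      have hchoice : ∃ i0 ∈ symmDiff u v, symmDiff u {i0} ∉ M := by
        by_cases hiM : symmDiff u {i} ∈ M
        · refine ⟨j, hj, fun hjM => ?_⟩
          have hne : symmDiff u {i} ≠ symmDiff u {j} := by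
            intro hE
            apply hij
            have h2 := congrArg (fun s => symmDiff u s) hE
            simp only [symmDiff_symmDiff_cancel_left] at h2
            exact Finset.singleton_injective h2
          have h3 := hM _ hiM _ hjM hne
          have hDD : symmDiff (symmDiff u {i}) (symmDiff u {j}) = ({i, j} : Finset (Fin n)) := by
            ext x
            by_cases hx1 : x = i <;> by_cases hx2 : x = j <;>
              simp_all [Finset.mem_symmDiff] <;> tauto
          rw [hDD] at h3
          have : ({i, j} : Finset (Fin n)).card ≤ 2 := Finset.card_insert_le _ _ |>.trans (by simp)
          omega
        · exact ⟨i, hi, hiM⟩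
      obtain ⟨i0, hi0, hwM⟩ := hchoice
      have hadj : (hypercube n).Adj u (symmDiff u {i0}) := by
        show (symmDiff u (symmDiff u {i0})).card = 1
        rw [symmDiff_symmDiff_cancel_left]
        simp
      have hwv : symmDiff (symmDiff u {i0}) v = (symmDiff u v).erase i0 := by
        ext x
        simp only [Finset.mem_symmDiff, Finset.mem_singleton, Finset.mem_erase] at *
        by_cases hx : x = i0 <;> simp_all <;> tauto
      have hcard : (symmDiff (symmDiff u {i0}) v).card = k := by
        rw [hwv, Finset.card_erase_of_mem hi0, h]
        omega
      obtain ⟨p, hp, hl, hsub, hMp⟩ := ih (symmDiff u {i0}) v hcard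
      have hu : u ∉ p.support := by
        intro hu
        have h1 := hsub u hu
        rw [hwv] at h1
        exact (Finset.notMem_erase i0 _) (h1 hi0)
      refine ⟨.cons hadj p, hp.cons hu, by simp [hl], ?_, ?_⟩
      · intro x hx
        rw [SimpleGraph.Walk.support_cons, List.mem_cons] at hx
        rcases hx with rfl | hx
        · exact subset_rfl
        · refine (hsub x hx).trans ?_
          rw [hwv]
          exact Finset.erase_subset _ _
      · intro x hx hxM
        rw [SimpleGraph.Walk.support_cons, List.mem_cons] at hx
        rcases hx with rfl | hx
        · exact Or.inl rfl
        · rcases hMp x hx hxM with rfl | rfl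
          · exact absurd hxM hwM
          · exact Or.inr rfl

lemma isTotal_of_min_dist (M : Set (Finset (Fin n)))
    (hM : ∀ a ∈ M, ∀ b ∈ M, a ≠ b → 3 ≤ (symmDiff a b).card) :
    IsTotalMutualVisibilitySet (hypercube n) M := by
  intro u v
  obtain ⟨p, hp, hl, -, hMp⟩ := exists_good_walk M hM (symmDiff u v).card u v rfl
  have hle : (hypercube n).dist u v ≤ p.length := SimpleGraph.dist_le p
  have hge : (symmDiff u v).card ≤ (hypercube n).dist u v := by
    obtain ⟨q, hq⟩ := (p.reachable).exists_walk_length_eq_dist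
    rw [← hq]
    exact card_symmDiff_le_walk_length q
  exact ⟨p, hp, by omega, hMp⟩

end Aux

/-- If `n = 2^m − 1` for a positive integer `m`, then `μ_t(Q_n) ≥ 2^n / (n+1)`. -/
theorem muTotal_hypercube_lower_hamming (m n : ℕ) (hm : 1 ≤ m) (hn : n = 2 ^ m - 1) :
    (2 : ℝ) ^ n / (n + 1) ≤ (muTotal n : ℝ) := by
  classical
  have h2m : n + 1 = 2 ^ m := by
    have h1 : 1 ≤ 2 ^ m := Nat.one_le_two_pow
    omega
  have hmn : m ≤ n := by
    have := Nat.lt_two_pow_self (n := m)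
    omega
  -- the parity-check map
  let f : Fin n → (Fin m → ZMod 2) := fun i j => if Nat.testBit (i.1 + 1) j.1 then 1 else 0
  have hbit : ∀ (a : Fin n), a.1 + 1 < 2 ^ m := fun a => by
    have := a.2; omega
  have hbits : ∀ (a b : Fin n), (∀ j, Nat.testBit (a.1+1) j = Nat.testBit (b.1+1) j) → a = b := by
    intro a b hab
    have := Nat.eq_of_testBit_eq hab
    exact Fin.ext (by omega)
  have hinj : Function.Injective f := by
    intro a b hab
    apply hbits
    intro j
    by_cases hj : j < m
    · have h1 := congrFun hab ⟨j, hj⟩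
      simp only [f] at h1
      by_cases hb1 : Nat.testBit (a.1+1) j <;> by_cases hb2 : Nat.testBit (b.1+1) j <;>
        simp_all
    · rw [Nat.testBit_eq_false_of_lt, Nat.testBit_eq_false_of_lt] <;>
        exact lt_of_lt_of_le (hbit _) (Nat.pow_le_pow_right (by norm_num) (by omega))
  have hne : ∀ i, f i ≠ 0 := by
    intro a h0
    have : (a.1 + 1 : ℕ) = 0 := by
      apply Nat.zero_of_testBit_eq_false
      intro j
      by_cases hj : j < m
      · have h1 := congrFun h0 ⟨j, hj⟩
        simp only [f, Pi.zero_apply] at h1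
        by_cases hb : Nat.testBit (a.1+1) j <;> simp_all
      · exact Nat.testBit_eq_false_of_lt
          (lt_of_lt_of_le (hbit _) (Nat.pow_le_pow_right (by norm_num) (by omega)))
    omega
  let σ : Finset (Fin n) → (Fin m → ZMod 2) := fun S => ∑ i ∈ S, f i
  have hself : ∀ x : Fin m → ZMod 2, x + x = 0 := by
    intro x
    funext j
    have : ∀ y : ZMod 2, y + y = 0 := by decide
    exact this (x j)
  have hσΔ : ∀ a b, σ (symmDiff a b) = σ a + σ b := by
    intro a b
    have hd : Disjoint (symmDiff a b) (a ∩ b) := disjoint_symmDiff_inf a b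
    have hu : symmDiff a b ∪ (a ∩ b) = a ∪ b := symmDiff_sup_inf a b
    have h1 : σ (symmDiff a b) + σ (a ∩ b) = σ (a ∪ b) := by
      rw [← Finset.sum_union hd, hu]
    have h2 : σ (a ∪ b) + σ (a ∩ b) = σ a + σ b := Finset.sum_union_inter
    calc σ (symmDiff a b) = σ (symmDiff a b) + (σ (a ∩ b) + σ (a ∩ b)) := by
            rw [hself, add_zero]
      _ = (σ (symmDiff a b) + σ (a ∩ b)) + σ (a ∩ b) := by abel
      _ = σ (a ∪ b) + σ (a ∩ b) := by rw [h1]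
      _ = σ a + σ b := h2
  -- pigeonhole: some fiber of σ is large
  have hcards : Fintype.card (Fin m → ZMod 2) * 2 ^ (n - m) ≤ Fintype.card (Finset (Fin n)) := by
    simp only [Fintype.card_finset, Fintype.card_fun, Fintype.card_fin, ZMod.card]
    rw [← pow_add]
    exact Nat.pow_le_pow_right (by norm_num) (by omega)
  obtain ⟨x, hx⟩ := Fintype.exists_le_card_fiber_of_mul_le_card σ hcards
  set C : Finset (Finset (Fin n)) := Finset.univ.filter (fun S => σ S = x) with hC
  -- C has minimum distance ≥ 3
  have hdist : ∀ a ∈ (↑C : Set (Finset (Fin n))), ∀ b ∈ (↑C : Set (Finset (Fin n))),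
      a ≠ b → 3 ≤ (symmDiff a b).card := by
    intro a ha b hb hab
    rw [Finset.mem_coe, hC, Finset.mem_filter] at ha hb
    have h0 : σ (symmDiff a b) = 0 := by rw [hσΔ, ha.2, hb.2, hself]
    by_contra hlt
    push_neg at hlt
    have hcases : (symmDiff a b).card = 0 ∨ (symmDiff a b).card = 1 ∨ (symmDiff a b).card = 2 := by
      omega
    rcases hcases with hc | hc | hc
    · exact hab (symmDiff_eq_bot.mp (Finset.card_eq_zero.mp hc))
    · obtain ⟨i, hi⟩ := Finset.card_eq_one.mp hc
      rw [hi] at h0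
      simp only [σ, Finset.sum_singleton] at h0
      exact hne i h0
    · obtain ⟨i, j, hij, hij2⟩ := Finset.card_eq_two.mp hc
      rw [hij2] at h0
      have hsum : f i + f j = 0 := by
        simpa [σ, Finset.sum_pair hij] using h0
      have : f i = f j := by
        calc f i = f i + (f i + f j) := by rw [hsum, add_zero]
          _ = (f i + f i) + f j := by abel
          _ = f j := by rw [hself, zero_add]
      exact hij (hinj this)
  have htotal : IsTotalMutualVisibilitySet (hypercube n) (↑C) :=
    isTotal_of_min_dist _ hdist
  -- muTotal is at least |C|
  have hmem : C.card ∈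
      {k | ∃ M : Set (Finset (Fin n)), IsTotalMutualVisibilitySet (hypercube n) M ∧ M.ncard = k} :=
    ⟨↑C, htotal, Set.ncard_coe_finset C⟩
  have hbdd : BddAbove
      {k | ∃ M : Set (Finset (Fin n)), IsTotalMutualVisibilitySet (hypercube n) M ∧ M.ncard = k} := by
    refine ⟨Fintype.card (Finset (Fin n)), ?_⟩
    rintro k ⟨M, -, rfl⟩
    calc M.ncard ≤ (Set.univ : Set (Finset (Fin n))).ncard :=
          Set.ncard_le_ncard (Set.subset_univ M) Set.finite_univ
      _ = Fintype.card (Finset (Fin n)) := by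
          rw [Set.ncard_univ, Nat.card_eq_fintype_card]
  have hmu : C.card ≤ muTotal n := le_csSup hbdd hmem
  have hlow : (2 : ℕ) ^ (n - m) ≤ muTotal n := le_trans hx hmu
  -- arithmetic
  have hpos : (0 : ℝ) < (n : ℝ) + 1 := by positivity
  rw [div_le_iff₀ hpos]
  have hcast : ((n : ℝ) + 1) = 2 ^ m := by exact_mod_cast h2m
  have hlowR : (2 : ℝ) ^ (n - m) ≤ (muTotal n : ℝ) := by exact_mod_cast hlow
  calc (2 : ℝ) ^ n = 2 ^ (n - m) * 2 ^ m := by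
        rw [← pow_add]
        congr 1
        omega
    _ ≤ (muTotal n : ℝ) * 2 ^ m := by
        have h2mp : (0:ℝ) < 2 ^ m := by positivity
        nlinarith
    _ = (muTotal n : ℝ) * ((n : ℝ) + 1) := by rw [hcast]
end

section
/- For every natural number n ≥ 1, the total chromatic mutual-visibility number of the n-dimensional hypercube satisfies n ≤ χ_μ^total(Q_n) ≤ 2n. -/
section AuxTMV

open Finset

variable {α : Type*} [DecidableEq α]

lemma symmDiff_singleton_of_mem' {s : Finset α} {a : α} (h : a ∈ s) :
    symmDiff s {a} = s.erase a := by
  ext x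
  simp only [Finset.mem_symmDiff, Finset.mem_erase, Finset.mem_singleton]
  by_cases hx : x = a <;> simp [hx, h]

lemma card_symmDiff_triangle' (u w v : Finset α) :
    (symmDiff u v).card ≤ (symmDiff u w).card + (symmDiff w v).card := by
  have h : symmDiff u v = symmDiff (symmDiff u w) (symmDiff w v) := by
    rw [symmDiff_assoc, symmDiff_symmDiff_cancel_left]
  rw [h]
  refine le_trans (Finset.card_le_card ?_) (Finset.card_union_le _ _)
  intro x hx
  rw [Finset.mem_symmDiff] at hx
  rw [Finset.mem_union]
  tauto

lemma symmDiff_eq_empty' {s t : Finset α} (h : symmDiff s t = ∅) : s = t :=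
  symmDiff_eq_bot.mp h

lemma walk_length_ge' {n : ℕ} {u v : Finset (Fin n)} (p : (hypercube n).Walk u v) :
    (symmDiff u v).card ≤ p.length := by
  induction p with
  | nil => simp [symmDiff_self]
  | @cons a b c h p ih =>
    have hab : (symmDiff a b).card = 1 := h
    calc (symmDiff a c).card ≤ (symmDiff a b).card + (symmDiff b c).card :=
          card_symmDiff_triangle' _ _ _
      _ ≤ 1 + p.length := by omega
      _ = (SimpleGraph.Walk.cons h p).length := by
          rw [SimpleGraph.Walk.length_cons]; omega

/-- The key inductive construction: if `M` contains no two vertices at distance 2,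
then between any two vertices there is a geodesic internally avoiding `M`. -/
lemma hypercube_key {n : ℕ} {M : Set (Finset (Fin n))}
    (hM : ∀ X ∈ M, ∀ Y ∈ M, X ≠ Y → (symmDiff X Y).card ≠ 2) :
    ∀ (d : ℕ) (v u : Finset (Fin n)), (symmDiff u v).card = d →
      ∃ p : (hypercube n).Walk u v, p.IsPath ∧ p.length = d ∧
        (∀ x ∈ p.support, x ∈ M → x = u ∨ x = v) ∧
        (∀ x ∈ p.support, (symmDiff x v).card ≤ d) := by
  intro d
  induction d with
  | zero =>
    intro v u hd
    have : u = v := symmDiff_eq_empty' (Finset.card_eq_zero.mp hd)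
    subst this
    refine ⟨SimpleGraph.Walk.nil, SimpleGraph.Walk.IsPath.nil, rfl, ?_, ?_⟩ <;>
      · intro x hx
        simp only [SimpleGraph.Walk.support_nil, List.mem_singleton] at hx
        subst hx
        simp [symmDiff_self]
  | succ d ih =>
    intro v u hd
    -- choose a coordinate `a ∈ u ∆ v` such that flipping it avoids M (when possible)
    have cancel : ∀ x y z : Finset (Fin n),
        symmDiff (symmDiff x y) (symmDiff x z) = symmDiff y z := by
      intro x y z
      rw [symmDiff_comm x y, symmDiff_assoc, symmDiff_symmDiff_cancel_left]
    have hex : ∃ a ∈ symmDiff u v, d = 0 ∨ symmDiff u {a} ∉ M := by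
      rcases Nat.eq_zero_or_pos d with rfl | hdpos
      · obtain ⟨a, ha⟩ := Finset.card_pos.mp (by omega : 0 < (symmDiff u v).card)
        exact ⟨a, ha, Or.inl rfl⟩
      · obtain ⟨a, ha, b, hb, hab⟩ := Finset.one_lt_card.mp
          (by omega : 1 < (symmDiff u v).card)
        by_cases hMa : symmDiff u {a} ∈ M
        · refine ⟨b, hb, Or.inr fun hMb => ?_⟩
          have hcard2 : (symmDiff (symmDiff u {a}) (symmDiff u {b})).card = 2 := by
            rw [cancel u {a} {b}]
            have : symmDiff ({a} : Finset (Fin n)) {b} = {a, b} := by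
              ext x
              simp only [Finset.mem_symmDiff, Finset.mem_singleton,
                Finset.mem_insert]
              constructor
              · tauto
              · rintro (rfl | rfl)
                · exact Or.inl ⟨rfl, fun h => hab h⟩
                · exact Or.inr ⟨rfl, fun h => hab h.symm⟩
            rw [this, Finset.card_pair hab]
          have hne : symmDiff u {a} ≠ symmDiff u {b} := by
            intro h
            rw [h, symmDiff_self] at hcard2
            simp at hcard2
          exact hM _ hMa _ hMb hne hcard2
        · exact ⟨a, ha, Or.inr hMa⟩
    obtain ⟨a, ha, hgood⟩ := hex
    set w : Finset (Fin n) := symmDiff u {a} with hw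
    have hadj : (hypercube n).Adj u w := by
      show (symmDiff u w).card = 1
      rw [hw, symmDiff_symmDiff_cancel_left]
      simp
    have hwv : symmDiff w v = (symmDiff u v).erase a := by
      rw [hw, symmDiff_right_comm, symmDiff_singleton_of_mem' ha]
    have hwvcard : (symmDiff w v).card = d := by
      rw [hwv, Finset.card_erase_of_mem ha, hd]
      omega
    obtain ⟨p, hpath, hlen, hMp, hbound⟩ := ih v w hwvcard
    refine ⟨SimpleGraph.Walk.cons hadj p, ?_, ?_, ?_, ?_⟩
    · rw [SimpleGraph.Walk.cons_isPath_iff]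
      refine ⟨hpath, fun hu => ?_⟩
      have := hbound u hu
      omega
    · simp [SimpleGraph.Walk.length_cons, hlen]
    · intro x hx hxM
      rw [SimpleGraph.Walk.support_cons, List.mem_cons] at hx
      rcases hx with rfl | hx
      · exact Or.inl rfl
      · rcases hMp x hx hxM with rfl | rfl
        · rcases hgood with hd0 | hnm
          · subst hd0
            have : w = v := symmDiff_eq_empty' (Finset.card_eq_zero.mp hwvcard)
            exact Or.inr this
          · exact absurd hxM hnm
        · exact Or.inr rfl
    · intro x hx
      rw [SimpleGraph.Walk.support_cons, List.mem_cons] at hx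
      rcases hx with rfl | hx
      · omega
      · have := hbound x hx; omega

lemma hypercube_dist {n : ℕ} (u v : Finset (Fin n)) :
    (hypercube n).dist u v = (symmDiff u v).card := by
  obtain ⟨p, -, hlen, -, -⟩ := hypercube_key (M := (∅ : Set (Finset (Fin n))))
    (by simp) _ v u rfl
  refine le_antisymm ?_ ?_
  · calc (hypercube n).dist u v ≤ p.length := SimpleGraph.dist_le p
      _ = _ := hlen
  · obtain ⟨q, hq⟩ := (p.reachable).exists_walk_length_eq_dist
    calc (symmDiff u v).card ≤ q.length := walk_length_ge' q
      _ = _ := hq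

/-- Sufficiency: no two elements at distance 2 implies total mutual-visibility. -/
lemma tmv_of_no_dist_two {n : ℕ} {M : Set (Finset (Fin n))}
    (hM : ∀ X ∈ M, ∀ Y ∈ M, X ≠ Y → (symmDiff X Y).card ≠ 2) :
    IsTotalMutualVisibilitySet (hypercube n) M := by
  intro u v
  obtain ⟨p, hpath, hlen, hMp, -⟩ := hypercube_key hM _ v u rfl
  exact ⟨p, hpath, by rw [hlen, hypercube_dist], hMp⟩

end AuxTMV

section AuxTMV2

open Finset

variable {α : Type*} [DecidableEq α]

lemma symmDiff_singleton_singleton' {a b : α} (hab : a ≠ b) :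
    symmDiff ({a} : Finset α) {b} = {a, b} := by
  ext x
  simp only [Finset.mem_symmDiff, Finset.mem_singleton, Finset.mem_insert]
  constructor
  · tauto
  · rintro (rfl | rfl)
    · exact Or.inl ⟨rfl, fun h => hab h⟩
    · exact Or.inr ⟨rfl, fun h => hab h.symm⟩

lemma subset_pair' {a b : α} {s : Finset α} (h : s ⊆ {a, b}) :
    s = ∅ ∨ s = {a} ∨ s = {b} ∨ s = {a, b} := by
  by_cases ha : a ∈ s <;> by_cases hb : b ∈ s
  · refine Or.inr (Or.inr (Or.inr (subset_antisymm h ?_)))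
    intro x hx
    simp only [Finset.mem_insert, Finset.mem_singleton] at hx
    rcases hx with rfl | rfl <;> assumption
  · refine Or.inr (Or.inl (subset_antisymm ?_ ?_))
    · intro x hx
      have := h hx
      simp only [Finset.mem_insert, Finset.mem_singleton] at this
      rcases this with rfl | rfl
      · simp
      · exact absurd hx hb
    · intro x hx
      simp only [Finset.mem_singleton] at hx
      subst hx; exact ha
  · refine Or.inr (Or.inr (Or.inl (subset_antisymm ?_ ?_)))
    · intro x hx
      have := h hx
      simp only [Finset.mem_insert, Finset.mem_singleton] at this
      rcases this with rfl | rfl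
      · exact absurd hx ha
      · simp
    · intro x hx
      simp only [Finset.mem_singleton] at hx
      subst hx; exact hb
  · refine Or.inl (Finset.eq_empty_iff_forall_notMem.mpr fun x hx => ?_)
    have := h hx
    simp only [Finset.mem_insert, Finset.mem_singleton] at this
    rcases this with rfl | rfl
    · exact ha hx
    · exact hb hx

/-- Necessity: two elements of `M` at distance 2 kill total mutual-visibility. -/
lemma not_tmv_of_dist_two {n : ℕ} {M : Set (Finset (Fin n))} {X Y : Finset (Fin n)}
    (hX : X ∈ M) (hY : Y ∈ M) (hne : X ≠ Y) (h2 : (symmDiff X Y).card = 2) :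
    ¬ IsTotalMutualVisibilitySet (hypercube n) M := by
  intro htmv
  obtain ⟨a, b, hab, hXY⟩ := Finset.card_eq_two.mp h2
  set u : Finset (Fin n) := symmDiff X {a} with hu
  set v : Finset (Fin n) := symmDiff X {b} with hv
  clear_value u v
  have cancel : ∀ x y z : Finset (Fin n),
      symmDiff (symmDiff x y) (symmDiff x z) = symmDiff y z := by
    intro x y z
    rw [symmDiff_comm x y, symmDiff_assoc, symmDiff_symmDiff_cancel_left]
  have huv : symmDiff u v = {a, b} := by
    rw [hu, hv, cancel, symmDiff_singleton_singleton' hab]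
  have hdist : (hypercube n).dist u v = 2 := by
    rw [hypercube_dist, huv, Finset.card_pair hab]
  obtain ⟨p, hpath, hlen, hcond⟩ := htmv u v
  rw [hdist] at hlen
  cases p with
  | nil => simp at hlen
  | cons hadj q =>
    rename_i w
    cases q with
    | nil => simp at hlen
    | cons hadj2 q2 =>
      rename_i z
      have hq2 : q2.length = 0 := by
        simp only [SimpleGraph.Walk.length_cons] at hlen; omega
      have hz : v = z := (SimpleGraph.Walk.eq_of_length_eq_zero hq2).symm
      subst hz
      -- w is the middle vertex
      have hwsup : w ∈ (SimpleGraph.Walk.cons hadj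
          (SimpleGraph.Walk.cons hadj2 q2)).support := by
        simp [SimpleGraph.Walk.support_cons]
      -- compute w ∈ {X, Y}
      have huw : (symmDiff u w).card = 1 := hadj
      obtain ⟨c, hc⟩ := Finset.card_eq_one.mp huw
      have hwc : w = symmDiff u {c} := by
        have := symmDiff_symmDiff_cancel_left (a := u) (b := w)
        rw [hc] at this
        exact this.symm
      have hwv : (symmDiff w v).card = 1 := hadj2
      have hwv2 : symmDiff w v = symmDiff {a, b} {c} := by
        rw [hwc, symmDiff_right_comm, huv]
      have hcab : c = a ∨ c = b := by
        by_contra hcc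
        push_neg at hcc
        have : symmDiff ({a, b} : Finset (Fin n)) {c} = {a, b, c} := by
          ext x
          simp only [Finset.mem_symmDiff, Finset.mem_insert, Finset.mem_singleton]
          constructor
          · tauto
          · rintro (rfl | rfl | rfl)
            · exact Or.inl ⟨Or.inl rfl, fun h => hcc.1 h.symm⟩
            · exact Or.inl ⟨Or.inr rfl, fun h => hcc.2 h.symm⟩
            · exact Or.inr ⟨rfl, by push_neg; exact ⟨fun h => hcc.1 h, fun h => hcc.2 h⟩⟩
        rw [hwv2, this] at hwv
        have h3 : ({a, b, c} : Finset (Fin n)).card = 3 := by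
          rw [Finset.card_insert_of_notMem, Finset.card_insert_of_notMem,
            Finset.card_singleton]
          · simp only [Finset.mem_singleton]; exact fun h => hcc.2 h.symm
          · simp only [Finset.mem_insert, Finset.mem_singleton]
            push_neg
            exact ⟨hab, fun h => hcc.1 h.symm⟩
        omega
      have hwXY : w = X ∨ w = Y := by
        rcases hcab with rfl | rfl
        · left
          rw [hwc, hu, symmDiff_assoc, symmDiff_self, symmDiff_bot]
        · right
          rw [hwc, hu, symmDiff_assoc]
          have : symmDiff ({a} : Finset (Fin n)) {c} = symmDiff X Y := by
            rw [symmDiff_singleton_singleton' hab, hXY]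
          rw [this, symmDiff_symmDiff_cancel_left]
      have hwM : w ∈ M := by rcases hwXY with rfl | rfl <;> assumption
      rcases hcond w hwsup hwM with rfl | rfl
      · exact (hypercube n).loopless.irrefl w hadj
      · exact (hypercube n).loopless.irrefl w hadj2

end AuxTMV2

/-- For every `n ≥ 1`, `n ≤ χ_μ^total(Q_n) ≤ 2n`. -/
theorem chiMuTotal_hypercube_bounds (n : ℕ) (hn : 1 ≤ n) :
    n ≤ chiMuTotal n ∧ chiMuTotal n ≤ 2 * n := by
  have h2n : 0 < 2 * n := by omega
  have hupper : 2 * n ∈ {k | ∃ c : Finset (Fin n) → Fin k, ∀ i : Fin k,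
      IsTotalMutualVisibilitySet (hypercube n) {A | c A = i}} := by
    refine ⟨fun A => ⟨(∑ i ∈ A, (i.val + 1)) % (2 * n), Nat.mod_lt _ h2n⟩, ?_⟩
    intro i
    apply tmv_of_no_dist_two
    intro X hX Y hY hne h2
    simp only [Set.mem_setOf_eq] at hX hY
    have hsum : (∑ i ∈ X, (i.val + 1)) % (2 * n)
        = (∑ i ∈ Y, (i.val + 1)) % (2 * n) := by
      have := hX.trans hY.symm
      simpa [Fin.ext_iff] using this
    obtain ⟨a, b, hab, hXY⟩ := Finset.card_eq_two.mp h2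
    set w : Fin n → ℕ := fun i => i.val + 1 with hw
    set P : ℕ := ∑ x ∈ X \ Y, w x with hP
    set Q : ℕ := ∑ x ∈ Y \ X, w x with hQ
    have hsplitX : ∑ x ∈ X ∩ Y, w x + P = ∑ x ∈ X, w x :=
      Finset.sum_inter_add_sum_sdiff X Y w
    have hsplitY : ∑ x ∈ X ∩ Y, w x + Q = ∑ x ∈ Y, w x := by
      rw [Finset.inter_comm]
      exact Finset.sum_inter_add_sum_sdiff Y X w
    have hPQmod : P % (2 * n) = Q % (2 * n) := by
      have h1 : (∑ x ∈ X ∩ Y, w x + P) % (2 * n)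
          = (∑ x ∈ X ∩ Y, w x + Q) % (2 * n) := by
        rw [hsplitX, hsplitY]; exact hsum
      exact Nat.ModEq.add_left_cancel' _ h1
    have hsubX : X \ Y ⊆ {a, b} := by
      intro x hx
      rw [← hXY, Finset.mem_symmDiff]
      rw [Finset.mem_sdiff] at hx
      exact Or.inl hx
    have hsubY : Y \ X ⊆ {a, b} := by
      intro x hx
      rw [← hXY, Finset.mem_symmDiff]
      rw [Finset.mem_sdiff] at hx
      exact Or.inr hx
    have hwab : w a + w b ≤ 2 * n - 1 := by
      have ha' : a.val < n := a.isLt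
      have hb' : b.val < n := b.isLt
      have hne' : a.val ≠ b.val := fun h => hab (Fin.ext h)
      simp only [hw]
      omega
    have hPle : P ≤ w a + w b := by
      rw [← Finset.sum_pair hab]
      exact Finset.sum_le_sum_of_subset hsubX
    have hQle : Q ≤ w a + w b := by
      rw [← Finset.sum_pair hab]
      exact Finset.sum_le_sum_of_subset hsubY
    have hPQ : P = Q := by
      rw [Nat.mod_eq_of_lt (by omega), Nat.mod_eq_of_lt (by omega)] at hPQmod
      exact hPQmod
    have hPQsum : P + Q = w a + w b := by
      rw [hP, hQ, ← Finset.sum_union disjoint_sdiff_sdiff]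
      have : X \ Y ∪ (Y \ X) = symmDiff X Y := by
        rw [symmDiff_def, Finset.sup_eq_union]
      rw [this, hXY, Finset.sum_pair hab]
    have hwa : 1 ≤ w a := by simp [hw]
    have hwb : 1 ≤ w b := by simp [hw]
    rcases subset_pair' hsubX with he | ha | hb | hab2
    · rw [hP, he, Finset.sum_empty] at hPQ hPQsum
      omega
    · rw [hP, ha, Finset.sum_singleton] at hPQ hPQsum
      have : a.val = b.val := by simp only [hw] at hPQ hPQsum ⊢; omega
      exact hab (Fin.ext this)
    · rw [hP, hb, Finset.sum_singleton] at hPQ hPQsum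
      have : a.val = b.val := by simp only [hw] at hPQ hPQsum ⊢; omega
      exact hab (Fin.ext this)
    · rw [hP, hab2, Finset.sum_pair hab] at hPQ hPQsum
      omega
  constructor
  · by_contra hlt
    push_neg at hlt
    have hmem : chiMuTotal n ∈ {k | ∃ c : Finset (Fin n) → Fin k, ∀ i : Fin k,
        IsTotalMutualVisibilitySet (hypercube n) {A | c A = i}} :=
      Nat.sInf_mem ⟨2 * n, hupper⟩
    obtain ⟨c, hc⟩ := hmem
    have hcard : Fintype.card (Fin (chiMuTotal n)) < Fintype.card (Fin n) := by
      simpa using hlt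
    obtain ⟨i, j, hij, hcij⟩ :=
      Fintype.exists_ne_map_eq_of_card_lt (fun i : Fin n => c {i}) hcard
    have hsne : ({i} : Finset (Fin n)) ≠ {j} :=
      fun h => hij (Finset.singleton_injective h)
    have h2 : (symmDiff ({i} : Finset (Fin n)) {j}).card = 2 := by
      rw [symmDiff_singleton_singleton' hij, Finset.card_pair hij]
    exact not_tmv_of_dist_two (M := {A | c A = c {i}})
      rfl hcij.symm hsne h2 (hc (c {i}))
  · exact Nat.sInf_le hupper
end
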